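/- If a runnable pattern on an open graph state is strongly deterministic, then all branch maps A_s are equal up to phase and each satisfies A_s† A_s = (1/2^n) U† U where U is the preparation-entanglement isometry and n the number of measurements; in particular 2^{n/2} A_s is an isometry from the input to the output Hilbert space. -/

import Mathlib

open scoped ComplexOrder

/-- If a runnable pattern with `n` measurements is strongly deterministic — all branch
maps `A_s = C_s ∘ Π_s ∘ U` (with `C_s` unitary on the output space and `U` the
preparation-entanglement isometry) are equal up to a global phase — then, using the
completeness relation `∑ₛ A_s† A_s = 1`, each branch map satisfies
`A_s† A_s = 2⁻ⁿ · U† U` (`= 2⁻ⁿ · Id`); in particular `2^{n/2} A_s` is an isometry. -/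
theorem strong_determinism_branch_maps
    {Hin HV Hout : Type*}
    [NormedAddCommGroup Hin] [InnerProductSpace ℂ Hin] [FiniteDimensional ℂ Hin]
    [NormedAddCommGroup HV] [InnerProductSpace ℂ HV] [FiniteDimensional ℂ HV]
    [NormedAddCommGroup Hout] [InnerProductSpace ℂ Hout] [FiniteDimensional ℂ Hout]
    (n : ℕ)
    (A : (Fin n → Bool) → (Hin →ₗ[ℂ] Hout))
    (C : (Fin n → Bool) → (Hout →ₗ[ℂ] Hout))
    (P : (Fin n → Bool) → (HV →ₗ[ℂ] Hout))
    (U : Hin →ₗ[ℂ] HV)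
    -- `U` is an isometry
    (hU : ∀ x : Hin, ‖U x‖ = ‖x‖)
    -- each `C_s` is unitary
    (hC : ∀ s, ∀ y : Hout, ‖C s y‖ = ‖y‖)
    -- branch maps decompose as `A_s = C_s Π_s U`
    (hA : ∀ s, A s = C s ∘ₗ P s ∘ₗ U)
    -- completeness relation `∑ₛ A_s† A_s = 1`
    (hcomp : ∑ s : Fin n → Bool, LinearMap.adjoint (A s) ∘ₗ A s = LinearMap.id)
    -- strong determinism: branch maps are equal up to a global phase
    (hdet : ∀ s s' : Fin n → Bool, ∃ φ : ℝ, A s = Complex.exp (φ * Complex.I) • A s') :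
    ∀ s : Fin n → Bool,
      LinearMap.adjoint (A s) ∘ₗ A s
          = ((2 : ℂ) ^ n)⁻¹ • (LinearMap.adjoint U ∘ₗ U) ∧
      LinearMap.adjoint (A s) ∘ₗ A s = ((2 : ℂ) ^ n)⁻¹ • LinearMap.id ∧
      ∀ x : Hin, Real.sqrt (2 ^ n) * ‖A s x‖ = ‖x‖ := by
  -- U† U = id
  have hUU : LinearMap.adjoint U ∘ₗ U = LinearMap.id := by
    have hiso : ∀ x y : Hin, inner ℂ (U x) (U y) = (inner ℂ x y : ℂ) := by
      intro x y
      exact (LinearIsometry.mk U hU).inner_map_map x y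
    ext x
    apply ext_inner_right ℂ
    intro y
    simp only [LinearMap.comp_apply, LinearMap.adjoint_inner_left, LinearMap.id_apply]
    exact hiso x y
  -- all A_s† A_s equal
  have key : ∀ s s' : Fin n → Bool,
      LinearMap.adjoint (A s) ∘ₗ A s = LinearMap.adjoint (A s') ∘ₗ A s' := by
    intro s s'
    obtain ⟨φ, hφ⟩ := hdet s s'
    rw [hφ, map_smulₛₗ, LinearMap.smul_comp, LinearMap.comp_smul, smul_smul]
    have : (starRingEnd ℂ) (Complex.exp (φ * Complex.I)) * Complex.exp (φ * Complex.I) = 1 := by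
      rw [← Complex.normSq_eq_conj_mul_self]
      simp [Complex.normSq_eq_norm_sq, Complex.norm_exp]
    rw [this, one_smul]
  intro s
  have card : Fintype.card (Fin n → Bool) = 2 ^ n := by simp
  have hsum : ((2 : ℂ) ^ n) • (LinearMap.adjoint (A s) ∘ₗ A s) = LinearMap.id := by
    rw [← hcomp]
    rw [Finset.sum_congr rfl fun s' _ => key s' s]
    rw [Finset.sum_const, Finset.card_univ, card]
    rw [← Nat.cast_smul_eq_nsmul ℂ, Nat.cast_pow, Nat.cast_ofNat]
  have h2 : LinearMap.adjoint (A s) ∘ₗ A s = ((2 : ℂ) ^ n)⁻¹ • LinearMap.id := by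
    rw [← hsum, smul_smul, inv_mul_cancel₀ (by positivity), one_smul]
  refine ⟨by rw [hUU, h2], h2, ?_⟩
  intro x
  have hc : (‖A s x‖ : ℂ) ^ 2 = ((2 : ℂ) ^ n)⁻¹ * (‖x‖ : ℂ) ^ 2 := by
    have h3 := congrArg (fun T : Hin →ₗ[ℂ] Hin => (inner ℂ x (T x) : ℂ)) h2
    simpa [LinearMap.comp_apply, LinearMap.adjoint_inner_right,
      inner_self_eq_norm_sq_to_K, LinearMap.smul_apply, inner_smul_right] using h3
  have hr : ‖A s x‖ ^ 2 = ((2 : ℝ) ^ n)⁻¹ * ‖x‖ ^ 2 := by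
    have : ((‖A s x‖ ^ 2 : ℝ) : ℂ) = ((((2 : ℝ) ^ n)⁻¹ * ‖x‖ ^ 2 : ℝ) : ℂ) := by
      push_cast
      exact hc
    exact_mod_cast this
  have hsq : (Real.sqrt (2 ^ n) * ‖A s x‖) ^ 2 = ‖x‖ ^ 2 := by
    rw [mul_pow, Real.sq_sqrt (by positivity), hr]
    field_simp
  have h1 : (0:ℝ) ≤ Real.sqrt (2 ^ n) * ‖A s x‖ := by positivity
  calc Real.sqrt (2 ^ n) * ‖A s x‖
      = Real.sqrt ((Real.sqrt (2 ^ n) * ‖A s x‖) ^ 2) := (Real.sqrt_sq h1).symm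
    _ = Real.sqrt (‖x‖ ^ 2) := by rw [hsq]
    _ = ‖x‖ := Real.sqrt_sq (norm_nonneg x)
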